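/- For any graph G=(V,E), integer q ≥ 1 and x ∈ ℂ \ {1}: q^{|V|} · Z_flow(G; q, x) = (1-x)^{|E|} · Z_Potts(G; q, (1+(q-1)x)/(1-x)). -/
import Mathlib


open Finset

noncomputable section

attribute [local instance] Classical.propDecidable

/-- A finite multigraph with a fixed orientation: each edge has a source and a target. -/
structure Multigraph (V E : Type) where
  src : E → V
  tgt : E → V

namespace Multigraph

variable {V E : Type} [Fintype V] [Fintype E] [DecidableEq V] [DecidableEq E]

/-- A `ℤ_q`-flow: conservation at every vertex. -/
def IsFlow (G : Multigraph V E) (q : ℕ) (f : E → ZMod q) : Prop :=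
  ∀ v : V, ∑ e ∈ univ.filter (fun e => G.tgt e = v), f e =
           ∑ e ∈ univ.filter (fun e => G.src e = v), f e

/-- A `ℤ`-flow: conservation at every vertex. -/
def IsZFlow (G : Multigraph V E) (f : E → ℤ) : Prop :=
  ∀ v : V, ∑ e ∈ univ.filter (fun e => G.tgt e = v), f e =
           ∑ e ∈ univ.filter (fun e => G.src e = v), f e

/-- The support of a flow: the set of edges with nonzero value. -/
def flowSupport {q : ℕ} (f : E → ZMod q) : Finset E :=
  univ.filter (fun e => f e ≠ 0)

/-- Flow partition function (complex variable). -/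
def Zflow (G : Multigraph V E) (q : ℕ) [NeZero q] (x : ℂ) : ℂ :=
  ∑ f ∈ univ.filter (fun f : E → ZMod q => G.IsFlow q f), x ^ (flowSupport f).card

/-- Flow partition function (real variable). -/
def ZflowR (G : Multigraph V E) (q : ℕ) [NeZero q] (x : ℝ) : ℝ :=
  ∑ f ∈ univ.filter (fun f : E → ZMod q => G.IsFlow q f), x ^ (flowSupport f).card

/-- Potts partition function: sum over colourings of `w ^ (number of monochromatic edges)`. -/
def ZPotts (G : Multigraph V E) (q : ℕ) (w : ℂ) : ℂ :=
  ∑ σ : V → Fin q, w ^ (univ.filter (fun e => σ (G.src e) = σ (G.tgt e))).card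

/-- The simple graph on `V` induced by the edges in `F` (loops/multiplicities dropped;
this does not change connected components). -/
def compRel (G : Multigraph V E) (F : Finset E) : SimpleGraph V :=
  SimpleGraph.fromRel (fun v w => ∃ e ∈ F, G.src e = v ∧ G.tgt e = w)

/-- Number of connected components of the spanning subgraph `(V, F)`. -/
def compCount (G : Multigraph V E) (F : Finset E) : ℕ :=
  Nat.card (G.compRel F).ConnectedComponent

/-- Random cluster partition function. -/
def ZRC (G : Multigraph V E) (q : ℕ) (y : ℂ) : ℂ :=
  ∑ F : Finset E, (q : ℂ) ^ (G.compCount F) * y ^ F.card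

/-- The spanning subgraph `(V, A)`. -/
def edgeSubgraph (G : Multigraph V E) (A : Finset E) : Multigraph V {e : E // e ∈ A} :=
  ⟨fun e => G.src e.1, fun e => G.tgt e.1⟩

/-- Deletion of the edge `e`. -/
def deleteEdge (G : Multigraph V E) (e : E) : Multigraph V {e' : E // e' ≠ e} :=
  ⟨fun e' => G.src e'.1, fun e' => G.tgt e'.1⟩

/-- Contraction of the edge `e`: the edge `e` is removed and every endpoint equal to
`G.tgt e` is redirected to `G.src e`, merging the two endpoints of `e`. -/
def contractEdge (G : Multigraph V E) (e : E) : Multigraph V {e' : E // e' ≠ e} :=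
  ⟨fun e' => if G.src e'.1 = G.tgt e then G.src e else G.src e'.1,
   fun e' => if G.tgt e'.1 = G.tgt e then G.src e else G.tgt e'.1⟩

end Multigraph

/-- The `(L+1) × (L+1)` grid graph, with horizontal and vertical edges oriented
in the positive direction. -/
def gridGraph (L : ℕ) :
    Multigraph (Fin (L+1) × Fin (L+1)) ((Fin L × Fin (L+1)) ⊕ (Fin (L+1) × Fin L)) :=
  ⟨Sum.elim (fun p => (p.1.castSucc, p.2)) (fun p => (p.1, p.2.castSucc)),
   Sum.elim (fun p => (p.1.succ, p.2)) (fun p => (p.1, p.2.succ))⟩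

private lemma addchar_map_sum {A M : Type*} [AddCommMonoid A] [CommMonoid M]
    (ψ : AddChar A M) {ι : Type*} (s : Finset ι) (g : ι → A) :
    ψ (∑ i ∈ s, g i) = ∏ i ∈ s, ψ (g i) := by
  induction s using Finset.cons_induction with
  | empty => simp
  | cons a s ha ih => rw [Finset.sum_cons, Finset.prod_cons, ψ.map_add_eq_mul, ih]

theorem flow_eq_potts {V E : Type} [Fintype V] [Fintype E] [DecidableEq V] [DecidableEq E]
    (G : Multigraph V E) (q : ℕ) [NeZero q] (x : ℂ) (hx : x ≠ 1) :
    (q : ℂ) ^ Fintype.card V * G.Zflow q x =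
      (1 - x) ^ Fintype.card E * G.ZPotts q ((1 + ((q : ℂ) - 1) * x) / (1 - x)) := by
  classical
  have hx1 : (1 : ℂ) - x ≠ 0 := sub_ne_zero.mpr (Ne.symm hx)
  set w : ℂ := (1 + ((q : ℂ) - 1) * x) / (1 - x) with hw
  have hwmul : (1 - x) * w = 1 + ((q : ℂ) - 1) * x := by
    rw [hw, mul_div_cancel₀ _ hx1]
  -- the additive character
  obtain ⟨ζ, hζ⟩ : ∃ ζ : ℂ, IsPrimitiveRoot ζ q :=
    ⟨_, Complex.isPrimitiveRoot_exp q (NeZero.ne q)⟩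
  set ψ : AddChar (ZMod q) ℂ := AddChar.zmodChar q hζ.pow_eq_one with hψdef
  have hψ : ψ.IsPrimitive := AddChar.zmodChar_primitive_of_primitive_root q hζ
  have hSum : ∀ c : ZMod q, ∑ a : ZMod q, ψ (a * c) = if c = 0 then (q : ℂ) else 0 := by
    intro c
    rw [AddChar.sum_mulShift c hψ, ZMod.card]
    split_ifs <;> simp
  -- notation
  set cE : (V → ZMod q) → E → ZMod q := fun σ e => σ (G.tgt e) - σ (G.src e) with hcE
  set δ : (E → ZMod q) → V → ZMod q := fun f v =>
    (∑ e ∈ univ.filter (fun e => G.tgt e = v), f e) -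
      (∑ e ∈ univ.filter (fun e => G.src e = v), f e) with hδ
  have hrearr : ∀ (f : E → ZMod q) (σ : V → ZMod q),
      ∑ e, f e * cE σ e = ∑ v, σ v * δ f v := by
    intro f σ
    simp only [hcE, hδ, mul_sub, Finset.sum_sub_distrib]
    congr 1
    · rw [← Finset.sum_fiberwise univ G.tgt (fun e => f e * σ (G.tgt e))]
      refine Finset.sum_congr rfl fun v _ => ?_
      rw [Finset.mul_sum]
      refine Finset.sum_congr rfl fun e he => ?_
      rw [Finset.mem_filter] at he
      rw [he.2]; ring
    · rw [← Finset.sum_fiberwise univ G.src (fun e => f e * σ (G.src e))]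
      refine Finset.sum_congr rfl fun v _ => ?_
      rw [Finset.mul_sum]
      refine Finset.sum_congr rfl fun e he => ?_
      rw [Finset.mem_filter] at he
      rw [he.2]; ring
  -- Step A
  have key1 : ∀ f : E → ZMod q,
      ∑ σ : V → ZMod q, ψ (∑ e, f e * cE σ e) =
        if G.IsFlow q f then (q : ℂ) ^ Fintype.card V else 0 := by
    intro f
    calc ∑ σ : V → ZMod q, ψ (∑ e, f e * cE σ e)
        = ∑ σ : V → ZMod q, ∏ v, ψ (σ v * δ f v) := by
          refine Finset.sum_congr rfl fun σ _ => ?_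
          rw [hrearr f σ, addchar_map_sum]
      _ = ∏ v, ∑ s : ZMod q, ψ (s * δ f v) := by
          rw [← Fintype.piFinset_univ]
          exact Finset.sum_prod_piFinset univ (fun v a => ψ (a * δ f v))
      _ = ∏ v, (if δ f v = 0 then (q : ℂ) else 0) := by
          refine Finset.prod_congr rfl fun v _ => hSum _
      _ = if G.IsFlow q f then (q : ℂ) ^ Fintype.card V else 0 := by
          by_cases hf : G.IsFlow q f
          · rw [if_pos hf]
            have h0 : ∀ v, δ f v = 0 := fun v => sub_eq_zero.mpr (hf v)
            simp [h0, Finset.card_univ]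
          · rw [if_neg hf]
            have : ∃ v, δ f v ≠ 0 := by
              by_contra h
              push_neg at h
              exact hf fun v => sub_eq_zero.mp (h v)
            obtain ⟨v, hv⟩ := this
            exact Finset.prod_eq_zero (Finset.mem_univ v) (by simp [hv])
  -- the local edge factor
  set S : ZMod q → ℂ := fun c => ∑ a : ZMod q, (if a = 0 then 1 else x) * ψ (a * c) with hSdef
  have hS : ∀ c : ZMod q, S c = (1 - x) + x * (if c = 0 then (q : ℂ) else 0) := by
    intro c
    have hdec : ∀ a : ZMod q,
        (if a = 0 then (1 : ℂ) else x) * ψ (a * c) =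
          x * ψ (a * c) + (if a = 0 then 1 - x else 0) := by
      intro a
      by_cases h : a = 0
      · simp only [h, if_pos, zero_mul, AddChar.map_zero_eq_one]
        ring
      · simp [h]
    rw [hSdef]
    simp only [hdec]
    rw [Finset.sum_add_distrib, ← Finset.mul_sum, hSum c,
      Finset.sum_ite_eq' univ (0 : ZMod q) (fun _ => (1 : ℂ) - x)]
    simp only [Finset.mem_univ, if_true]
    ring
  -- Step B
  have key2 : ∀ σ : V → ZMod q,
      ∑ f : E → ZMod q, x ^ (Multigraph.flowSupport f).card * ψ (∑ e, f e * cE σ e) =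
        ∏ e, S (cE σ e) := by
    intro σ
    have hsupp : ∀ f : E → ZMod q,
        x ^ (Multigraph.flowSupport f).card = ∏ e, (if f e = 0 then (1 : ℂ) else x) := by
      intro f
      rw [Finset.prod_ite, Finset.prod_const, Finset.prod_const, one_pow, one_mul]
      congr 2
    calc ∑ f : E → ZMod q, x ^ (Multigraph.flowSupport f).card * ψ (∑ e, f e * cE σ e)
        = ∑ f : E → ZMod q, ∏ e, ((if f e = 0 then (1 : ℂ) else x) * ψ (f e * cE σ e)) := by
          refine Finset.sum_congr rfl fun f _ => ?_
          rw [hsupp f, addchar_map_sum, ← Finset.prod_mul_distrib]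
      _ = ∏ e, ∑ a : ZMod q, (if a = 0 then (1 : ℂ) else x) * ψ (a * cE σ e) := by
          rw [← Fintype.piFinset_univ]
          exact Finset.sum_prod_piFinset univ
            (fun e a => (if a = 0 then (1 : ℂ) else x) * ψ (a * cE σ e))
      _ = ∏ e, S (cE σ e) := rfl
  -- the per-colouring product
  have key3 : ∀ σ : V → ZMod q,
      ∏ e, S (cE σ e) =
        (1 + ((q : ℂ) - 1) * x) ^ (univ.filter (fun e => σ (G.src e) = σ (G.tgt e))).card *
          (1 - x) ^ (univ.filter (fun e => ¬σ (G.src e) = σ (G.tgt e))).card := by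
    intro σ
    have hedge : ∀ e, S (cE σ e) =
        if σ (G.src e) = σ (G.tgt e) then 1 + ((q : ℂ) - 1) * x else 1 - x := by
      intro e
      rw [hS]
      by_cases h : σ (G.src e) = σ (G.tgt e)
      · rw [if_pos h, if_pos (by rw [hcE]; simp [h]), ]
        ring
      · rw [if_neg h, if_neg (by rw [hcE]; simp [sub_eq_zero]; exact fun h' => h h'.symm)]
        ring
    simp only [hedge]
    rw [Finset.prod_ite, Finset.prod_const, Finset.prod_const]
  -- assemble the left side
  have hLHS : (q : ℂ) ^ Fintype.card V * G.Zflow q x =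
      ∑ σ : V → ZMod q,
        (1 + ((q : ℂ) - 1) * x) ^ (univ.filter (fun e => σ (G.src e) = σ (G.tgt e))).card *
          (1 - x) ^ (univ.filter (fun e => ¬σ (G.src e) = σ (G.tgt e))).card := by
    calc (q : ℂ) ^ Fintype.card V * G.Zflow q x
        = ∑ f ∈ univ.filter (fun f : E → ZMod q => G.IsFlow q f),
            (q : ℂ) ^ Fintype.card V * x ^ (Multigraph.flowSupport f).card := by
          rw [Multigraph.Zflow, Finset.mul_sum]
      _ = ∑ f : E → ZMod q,
            (if G.IsFlow q f then (q : ℂ) ^ Fintype.card V else 0) *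
              x ^ (Multigraph.flowSupport f).card := by
          rw [Finset.sum_filter]
          refine Finset.sum_congr rfl fun f _ => ?_
          split_ifs <;> simp
      _ = ∑ f : E → ZMod q, ∑ σ : V → ZMod q,
            x ^ (Multigraph.flowSupport f).card * ψ (∑ e, f e * cE σ e) := by
          refine Finset.sum_congr rfl fun f _ => ?_
          rw [← key1 f, Finset.sum_mul]
          exact Finset.sum_congr rfl fun σ _ => mul_comm _ _
      _ = ∑ σ : V → ZMod q, ∑ f : E → ZMod q,
            x ^ (Multigraph.flowSupport f).card * ψ (∑ e, f e * cE σ e) := by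
          rw [Finset.sum_comm]
      _ = ∑ σ : V → ZMod q, ∏ e, S (cE σ e) := by
          exact Finset.sum_congr rfl fun σ _ => key2 σ
      _ = _ := Finset.sum_congr rfl fun σ _ => key3 σ
  -- assemble the right side
  have ρ : Fin q ≃ ZMod q := (Fintype.equivFinOfCardEq (ZMod.card q)).symm
  have hRHS : (1 - x) ^ Fintype.card E * G.ZPotts q w =
      ∑ σ : V → ZMod q,
        (1 + ((q : ℂ) - 1) * x) ^ (univ.filter (fun e => σ (G.src e) = σ (G.tgt e))).card *
          (1 - x) ^ (univ.filter (fun e => ¬σ (G.src e) = σ (G.tgt e))).card := by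
    rw [Multigraph.ZPotts, Finset.mul_sum]
    rw [← Equiv.sum_comp (Equiv.piCongrRight fun _ : V => ρ)
      (fun σ : V → ZMod q =>
        (1 + ((q : ℂ) - 1) * x) ^ (univ.filter (fun e => σ (G.src e) = σ (G.tgt e))).card *
          (1 - x) ^ (univ.filter (fun e => ¬σ (G.src e) = σ (G.tgt e))).card)]
    refine Finset.sum_congr rfl fun σ _ => ?_
    have hfeq : ∀ e, ((Equiv.piCongrRight fun _ : V => ρ) σ) (G.src e) =
        ((Equiv.piCongrRight fun _ : V => ρ) σ) (G.tgt e) ↔ σ (G.src e) = σ (G.tgt e) := by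
      intro e
      constructor
      · intro h; exact ρ.injective h
      · intro h; simp [Equiv.piCongrRight, h]
    have hm : (univ.filter (fun e => ((Equiv.piCongrRight fun _ : V => ρ) σ) (G.src e) =
          ((Equiv.piCongrRight fun _ : V => ρ) σ) (G.tgt e))).card =
        (univ.filter (fun e => σ (G.src e) = σ (G.tgt e))).card := by
      congr 1
      ext e
      simp [hfeq e]
    have hn : (univ.filter (fun e => ¬((Equiv.piCongrRight fun _ : V => ρ) σ) (G.src e) =
          ((Equiv.piCongrRight fun _ : V => ρ) σ) (G.tgt e))).card =
        (univ.filter (fun e => ¬σ (G.src e) = σ (G.tgt e))).card := by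
      congr 1
      ext e
      simp [hfeq e]
    rw [hm, hn]
    -- now pure algebra
    set m := (univ.filter (fun e => σ (G.src e) = σ (G.tgt e))).card with hm'
    set n := (univ.filter (fun e => ¬σ (G.src e) = σ (G.tgt e))).card with hn'
    have hmn : m + n = Fintype.card E := by
      rw [hm', hn', ← Finset.card_univ]
      exact Finset.card_filter_add_card_filter_not _
    rw [← hmn, pow_add, mul_comm ((1-x)^m) ((1-x)^n), mul_assoc, ← mul_pow, hwmul, mul_comm]
  rw [hLHS, hRHS]
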